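/- Let K = ℂ(x₁,…,xₙ) and let q₁(λ), q₂(λ) ∈ K[λ]. If, with respect to a compatible total ordering ⪯^ρ, 1/q₁(λ) is PT^ρ in λ and 1/q₂(λ) is NT^ρ in λ, then q₁(λ) and q₂(λ) have no nontrivial common divisor in K[λ], i.e., they are relatively prime. -/

import Mathlib

open scoped Classical

noncomputable section

/-- The field `K = ℂ(x₁, …, xₙ)` of rational functions in the `x`-variables. -/
abbrev RatField (n : ℕ) := FractionRing (MvPolynomial (Fin n) ℂ)

/-- Keep only the coefficients of a Hahn series at indices satisfying `P`; with
`P g = ((e g).1 = 0)` this is the constant-term operator `CT_λ` of a Malcev–Neumann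
series. -/
def ctFilter {Γ : Type} [AddCommGroup Γ] [LinearOrder Γ] [IsOrderedAddMonoid Γ] (P : Γ → Prop)
    (F : HahnSeries Γ ℂ) : HahnSeries Γ ℂ where
  coeff g := if P g then F.coeff g else 0
  isPWO_support' := F.isPWO_support'.mono (fun g hg => by
    simp only [Function.mem_support, ne_eq] at hg ⊢
    intro h0
    exact hg (by simp [h0]))

/-- The monomial `λ^a·x^v` in the Malcev–Neumann field `ℂ^ρ⟪λ, x⟫`, realized as the Hahn
series field over a linearly ordered abelian group `Γ` identified with the exponent group
`ℤ × ℤⁿ` (first coordinate: exponent of `λ`). -/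
def mnMonomial (n : ℕ) (Γ : Type) [AddCommGroup Γ] [LinearOrder Γ] [IsOrderedAddMonoid Γ]
    (e : Γ ≃+ ℤ × (Fin n → ℤ)) (a : ℤ) (v : Fin n → ℤ) : HahnSeries Γ ℂ :=
  HahnSeries.single (e.symm (a, v)) 1

/-- `Φ : K → ℂ^ρ⟪λ, x⟫` is the canonical embedding of the rational function field
`K = ℂ(x₁, …, xₙ)` into the Malcev–Neumann field: it fixes the scalars `ℂ` and sends each
`xᵢ` to the corresponding monomial.  (Such a ring homomorphism exists and is unique, and
it sends each rational function to its Malcev–Neumann series expansion.) -/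
def IsExpansionHom (n : ℕ) (Γ : Type) [AddCommGroup Γ] [LinearOrder Γ] [IsOrderedAddMonoid Γ]
    (e : Γ ≃+ ℤ × (Fin n → ℤ)) (Φ : RatField n →+* HahnSeries Γ ℂ) : Prop :=
  (∀ c : ℂ, Φ (algebraMap (MvPolynomial (Fin n) ℂ) (RatField n) (MvPolynomial.C c)) =
      HahnSeries.C c) ∧
  (∀ i : Fin n, Φ (algebraMap (MvPolynomial (Fin n) ℂ) (RatField n) (MvPolynomial.X i)) =
      mnMonomial n Γ e 0 (Pi.single i 1))

/-- The Malcev–Neumann expansion of a polynomial `q ∈ K[λ]`: coefficients are expanded by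
`Φ` and `λ` is sent to its monomial. -/
def mnExpand (n : ℕ) (Γ : Type) [AddCommGroup Γ] [LinearOrder Γ] [IsOrderedAddMonoid Γ]
    (e : Γ ≃+ ℤ × (Fin n → ℤ)) (Φ : RatField n →+* HahnSeries Γ ℂ)
    (q : Polynomial (RatField n)) : HahnSeries Γ ℂ :=
  Polynomial.eval₂ Φ (mnMonomial n Γ e 1 0) q

/-- `1/q(λ)` is `PT^ρ` in `λ`: its Malcev–Neumann expansion contains only nonnegative
powers of `λ`. -/
def IsPT (n : ℕ) (Γ : Type) [AddCommGroup Γ] [LinearOrder Γ] [IsOrderedAddMonoid Γ]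
    (e : Γ ≃+ ℤ × (Fin n → ℤ)) (Φ : RatField n →+* HahnSeries Γ ℂ)
    (q : Polynomial (RatField n)) : Prop :=
  ∀ g : Γ, ((mnExpand n Γ e Φ q)⁻¹).coeff g ≠ 0 → 0 ≤ (e g).1

/-- `1/q(λ)` is `NT^ρ` in `λ`: its Malcev–Neumann expansion contains only negative powers
of `λ`. -/
def IsNT (n : ℕ) (Γ : Type) [AddCommGroup Γ] [LinearOrder Γ] [IsOrderedAddMonoid Γ]
    (e : Γ ≃+ ℤ × (Fin n → ℤ)) (Φ : RatField n →+* HahnSeries Γ ℂ)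
    (q : Polynomial (RatField n)) : Prop :=
  ∀ g : Γ, ((mnExpand n Γ e Φ q)⁻¹).coeff g ≠ 0 → (e g).1 < 0

/-- `q(λ) ∈ K[λ]` is `ρ`-factorable: `q = q₁q₂` where `1/q₁` is `PT^ρ` and `1/q₂` is
`NT^ρ` in `λ`. -/
def IsRhoFactorable (n : ℕ) (Γ : Type) [AddCommGroup Γ] [LinearOrder Γ] [IsOrderedAddMonoid Γ]
    (e : Γ ≃+ ℤ × (Fin n → ℤ)) (Φ : RatField n →+* HahnSeries Γ ℂ)
    (q : Polynomial (RatField n)) : Prop :=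
  ∃ q₁ q₂ : Polynomial (RatField n), q = q₁ * q₂ ∧ q₁ ≠ 0 ∧ q₂ ≠ 0 ∧
    IsPT n Γ e Φ q₁ ∧ IsNT n Γ e Φ q₂

/-- `CT_{λ=0} F`: the coefficient of `λ⁰` of the expansion of `F ∈ K(λ)` in the Laurent
series field `K((λ))`. -/
def ctZero (n : ℕ) (F : RatFunc (RatField n)) : RatField n :=
  (F : LaurentSeries (RatField n)).coeff 0

/-- `CT_{λ=∞} F`: the coefficient of `λ⁰` of the expansion of `F ∈ K(λ)` in `K((λ⁻¹))`,
i.e. `CT_{λ=0}` of `F(λ⁻¹)`. -/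
def ctInfty (n : ℕ) (F : RatFunc (RatField n)) : RatField n :=
  ctZero n (RatFunc.eval (algebraMap (RatField n) (RatFunc (RatField n))) (RatFunc.X)⁻¹ F)

set_option maxHeartbeats 1000000
set_option synthInstance.maxHeartbeats 200000
section AuxLemmas

open Polynomial HahnSeries

variable {n : ℕ} {Γ : Type} [AddCommGroup Γ] [LinearOrder Γ] [IsOrderedAddMonoid Γ]
  {e : Γ ≃+ ℤ × (Fin n → ℤ)} {Φ : RatField n →+* HahnSeries Γ ℂ}

lemma ctFilter_coeff (P : Γ → Prop) (F : HahnSeries Γ ℂ) (g : Γ) :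
    (ctFilter P F).coeff g = if P g then F.coeff g else 0 := rfl

lemma ctFilter_add (P : Γ → Prop) (F G : HahnSeries Γ ℂ) :
    ctFilter P (F + G) = ctFilter P F + ctFilter P G := by
  ext g
  simp only [ctFilter_coeff, HahnSeries.coeff_add]
  split <;> simp

lemma ctFilter_eq_self {P : Γ → Prop} {F : HahnSeries Γ ℂ}
    (h : ∀ g ∈ F.support, P g) : ctFilter P F = F := by
  ext g
  rw [ctFilter_coeff]
  by_cases hg : F.coeff g = 0
  · simp [hg]
  · rw [if_pos (h g hg)]

lemma ctFilter_eq_zero {P : Γ → Prop} {F : HahnSeries Γ ℂ}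
    (h : ∀ g ∈ F.support, ¬ P g) : ctFilter P F = 0 := by
  ext g
  rw [ctFilter_coeff, HahnSeries.coeff_zero]
  by_cases hg : F.coeff g = 0
  · simp [hg]
  · rw [if_neg (h g hg)]

lemma mem_support_ctFilter {P : Γ → Prop} {F : HahnSeries Γ ℂ} {g : Γ}
    (h : g ∈ (ctFilter P F).support) : P g ∧ g ∈ F.support := by
  rw [HahnSeries.mem_support, ctFilter_coeff] at h
  by_cases hp : P g
  · rw [if_pos hp] at h; exact ⟨hp, h⟩
  · rw [if_neg hp] at h; exact absurd rfl h

lemma mem_support_sub_ctFilter {P : Γ → Prop} {F : HahnSeries Γ ℂ} {g : Γ}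
    (h : g ∈ (F - ctFilter P F).support) : ¬ P g ∧ g ∈ F.support := by
  rw [HahnSeries.mem_support, HahnSeries.coeff_sub, ctFilter_coeff] at h
  by_cases hp : P g
  · rw [if_pos hp, sub_self] at h; exact absurd rfl h
  · rw [if_neg hp, sub_zero] at h; exact ⟨hp, h⟩

lemma hahn_sum_coeff {ι : Type*} (s : Finset ι) (f : ι → HahnSeries Γ ℂ) (g : Γ) :
    (∑ i ∈ s, f i).coeff g = ∑ i ∈ s, (f i).coeff g := by
  classical
  induction s using Finset.cons_induction with
  | empty => simp
  | cons i s hi ih => rw [Finset.sum_cons, Finset.sum_cons, HahnSeries.coeff_add, ih]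

lemma ctFilter_sum {ι : Type*} (P : Γ → Prop) (s : Finset ι) (f : ι → HahnSeries Γ ℂ) :
    ctFilter P (∑ i ∈ s, f i) = ∑ i ∈ s, ctFilter P (f i) := by
  classical
  induction s using Finset.cons_induction with
  | empty => exact ctFilter_eq_zero (by simp)
  | cons i s hi ih => rw [Finset.sum_cons, Finset.sum_cons, ctFilter_add, ih]

/-- The first coordinate of `e` is additive. -/
lemma eFst_add (e : Γ ≃+ ℤ × (Fin n → ℤ)) (a b : Γ) :
    (e (a + b)).1 = (e a).1 + (e b).1 := by
  rw [map_add]; rfl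

lemma supp_algebraMap (hΦ : IsExpansionHom n Γ e Φ) (a : MvPolynomial (Fin n) ℂ) :
    ∀ g ∈ (Φ (algebraMap (MvPolynomial (Fin n) ℂ) (RatField n) a)).support, (e g).1 = 0 := by
  induction a using MvPolynomial.induction_on with
  | C c =>
      intro g hg
      rw [hΦ.1 c] at hg
      have : g ∈ ({(0 : Γ)} : Set Γ) := HahnSeries.support_single_subset hg
      rw [Set.mem_singleton_iff] at this
      rw [this, _root_.map_zero]; rfl
  | add p q hp hq =>
      intro g hg
      rw [(algebraMap (MvPolynomial (Fin n) ℂ) (RatField n)).map_add, Φ.map_add] at hg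
      rcases HahnSeries.support_add_subset _ _ hg with h | h
      · exact hp g h
      · exact hq g h
  | mul_X p i hp =>
      intro g hg
      rw [(algebraMap (MvPolynomial (Fin n) ℂ) (RatField n)).map_mul, Φ.map_mul, hΦ.2 i] at hg
      obtain ⟨u, hu, v, hv, huv⟩ := HahnSeries.support_mul_subset hg
      simp only [mnMonomial] at hv
      have hv' : v ∈ ({e.symm ((0 : ℤ), Pi.single i 1)} : Set Γ) :=
        HahnSeries.support_single_subset hv
      rw [Set.mem_singleton_iff] at hv'
      subst huv
      rw [eFst_add, hp u hu, hv', e.apply_symm_apply]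
      rfl

/-- support of a power of the λ-monomial. -/
lemma supp_lamPow (e : Γ ≃+ ℤ × (Fin n → ℤ)) (j : ℕ) :
    ∀ g ∈ ((mnMonomial n Γ e 1 0) ^ j).support, (e g).1 = j := by
  intro g hg
  rw [mnMonomial, HahnSeries.single_pow, one_pow] at hg
  have : g ∈ ({j • e.symm ((1 : ℤ), (0 : Fin n → ℤ))} : Set Γ) :=
    HahnSeries.support_single_subset hg
  rw [Set.mem_singleton_iff] at this
  rw [this, map_nsmul, e.apply_symm_apply]
  simp

lemma supp_term (hΦ : IsExpansionHom n Γ e Φ) {c : RatField n}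
    (hc : ∃ a : MvPolynomial (Fin n) ℂ, c = algebraMap (MvPolynomial (Fin n) ℂ) (RatField n) a)
    (j : ℕ) : ∀ g ∈ (Φ c * (mnMonomial n Γ e 1 0) ^ j).support, (e g).1 = j := by
  intro g hg
  obtain ⟨a, rfl⟩ := hc
  obtain ⟨u, hu, v, hv, huv⟩ := HahnSeries.support_mul_subset hg
  subst huv
  rw [eFst_add, supp_algebraMap hΦ a u hu, supp_lamPow e j v hv, zero_add]

/-- A polynomial with "polynomial" coefficients. -/
def GoodPoly (n : ℕ) (p : Polynomial (RatField n)) : Prop :=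
  ∀ j, ∃ a : MvPolynomial (Fin n) ℂ,
    p.coeff j = algebraMap (MvPolynomial (Fin n) ℂ) (RatField n) a

lemma mnExpand_supp_le (hΦ : IsExpansionHom n Γ e Φ) {p : Polynomial (RatField n)}
    (hp : GoodPoly n p) :
    ∀ g ∈ (mnExpand n Γ e Φ p).support, 0 ≤ (e g).1 ∧ (e g).1 ≤ (p.natDegree : ℤ) := by
  intro g hg
  rw [HahnSeries.mem_support] at hg
  rw [mnExpand, Polynomial.eval₂_eq_sum_range, hahn_sum_coeff] at hg
  obtain ⟨j, hj, hj0⟩ := Finset.exists_ne_zero_of_sum_ne_zero hg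
  have := supp_term hΦ (hp j) j g hj0
  rw [Finset.mem_range] at hj
  constructor
  · rw [this]; exact Int.ofNat_nonneg j
  · rw [this]; exact_mod_cast Nat.lt_succ_iff.mp hj

lemma mnExpand_top (hΦ : IsExpansionHom n Γ e Φ) {p : Polynomial (RatField n)}
    (hp : GoodPoly n p) (hp0 : p ≠ 0) :
    ctFilter (fun g => (e g).1 = (p.natDegree : ℤ)) (mnExpand n Γ e Φ p) ≠ 0 := by
  classical
  set k := p.natDegree with hk
  have hsum : ctFilter (fun g => (e g).1 = (k : ℤ)) (mnExpand n Γ e Φ p)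
      = Φ (p.coeff k) * (mnMonomial n Γ e 1 0) ^ k := by
    rw [mnExpand, Polynomial.eval₂_eq_sum_range, ctFilter_sum]
    rw [Finset.sum_eq_single k]
    · exact ctFilter_eq_self (fun g hg => supp_term hΦ (hp k) k g hg)
    · intro j hj hjk
      refine ctFilter_eq_zero (fun g hg => ?_)
      rw [supp_term hΦ (hp j) j g hg]
      exact_mod_cast hjk
    · intro hk'
      exact absurd (Finset.self_mem_range_succ k) hk'
  rw [hsum]
  have h1 : Φ (p.coeff k) ≠ 0 := by
    intro h
    have hck : p.coeff k = 0 := Φ.injective (by rw [h, Φ.map_zero])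
    exact Polynomial.leadingCoeff_ne_zero.mpr hp0 hck
  have h2 : (mnMonomial n Γ e 1 0 : HahnSeries Γ ℂ) ^ k ≠ 0 :=
    pow_ne_zero _ (HahnSeries.single_ne_zero one_ne_zero)
  exact mul_ne_zero h1 h2

lemma mnExpand_ne_zero (hΦ : IsExpansionHom n Γ e Φ) {p : Polynomial (RatField n)}
    (hp : GoodPoly n p) (hp0 : p ≠ 0) : mnExpand n Γ e Φ p ≠ 0 := by
  intro h
  exact mnExpand_top hΦ hp hp0 (by rw [h]; exact ctFilter_eq_zero (by simp))

lemma mnExpand_mul (p q : Polynomial (RatField n)) :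
    mnExpand n Γ e Φ (p * q) = mnExpand n Γ e Φ p * mnExpand n Γ e Φ q := by
  rw [mnExpand, mnExpand, mnExpand, Polynomial.eval₂_mul]

/-- Clearing denominators of the coefficients of a polynomial over the fraction field. -/
lemma clear_denoms (p : Polynomial (RatField n)) :
    ∃ b : RatField n, b ≠ 0 ∧
      (∃ b0 : MvPolynomial (Fin n) ℂ, b = algebraMap (MvPolynomial (Fin n) ℂ) (RatField n) b0) ∧
      GoodPoly n (Polynomial.C b * p) := by
  classical
  set A := MvPolynomial (Fin n) ℂ
  set K := RatField n
  have hsurj : ∀ j : ℕ, ∃ x : A × (nonZeroDivisors A),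
      p.coeff j * algebraMap A K (x.2 : A) = algebraMap A K x.1 :=
    fun j => IsLocalization.surj (nonZeroDivisors A) (p.coeff j)
  choose F hF using hsurj
  set b0 : A := ∏ j ∈ p.support, ((F j).2 : A) with hb0
  have hb0ne : b0 ≠ 0 := by
    rw [hb0]
    refine Finset.prod_ne_zero_iff.mpr (fun j _ => ?_)
    exact nonZeroDivisors.ne_zero (F j).2.2
  refine ⟨algebraMap A K b0, ?_, ⟨b0, rfl⟩, ?_⟩
  · rwa [Ne, IsFractionRing.to_map_eq_zero_iff]
  · intro j
    rw [Polynomial.coeff_C_mul]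
    by_cases hj : j ∈ p.support
    · refine ⟨(F j).1 * ∏ i ∈ p.support.erase j, ((F i).2 : A), ?_⟩
      have hb : algebraMap A K b0
          = algebraMap A K ((F j).2 : A) * algebraMap A K (∏ i ∈ p.support.erase j, ((F i).2 : A)) := by
        rw [hb0, ← Finset.mul_prod_erase _ _ hj, (algebraMap A K).map_mul]
      calc algebraMap A K b0 * p.coeff j
          = p.coeff j * algebraMap A K ((F j).2 : A)
            * algebraMap A K (∏ i ∈ p.support.erase j, ((F i).2 : A)) := by rw [hb]; ring
        _ = algebraMap A K (F j).1
            * algebraMap A K (∏ i ∈ p.support.erase j, ((F i).2 : A)) := by rw [hF j]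
        _ = algebraMap A K ((F j).1 * ∏ i ∈ p.support.erase j, ((F i).2 : A)) := by
            rw [(algebraMap A K).map_mul]
    · refine ⟨0, ?_⟩
      rw [Polynomial.notMem_support_iff.mp hj, (algebraMap A K).map_zero, mul_zero]

end AuxLemmas
section MoreAux
open Polynomial
variable {n : ℕ}
lemma GoodPoly.C_mul {b : RatField n}
    (hb : ∃ b0 : MvPolynomial (Fin n) ℂ, b = algebraMap (MvPolynomial (Fin n) ℂ) (RatField n) b0)
    {p : Polynomial (RatField n)} (hp : GoodPoly n p) :
    GoodPoly n (Polynomial.C b * p) := by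
  obtain ⟨b0, rfl⟩ := hb
  intro j
  obtain ⟨a, ha⟩ := hp j
  exact ⟨b0 * a, by rw [Polynomial.coeff_C_mul, ha, (algebraMap (MvPolynomial (Fin n) ℂ) (RatField n)).map_mul]⟩
end MoreAux

/-- **Corollary 3.3 (c-relprime).** -/
theorem coprime_of_pt_nt
    (n : ℕ) (Γ : Type) [AddCommGroup Γ] [LinearOrder Γ] [IsOrderedAddMonoid Γ]
    (e : Γ ≃+ ℤ × (Fin n → ℤ))
    (Φ : RatField n →+* HahnSeries Γ ℂ) (hΦ : IsExpansionHom n Γ e Φ)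
    (q₁ q₂ : Polynomial (RatField n)) (hq₁ : q₁ ≠ 0) (hq₂ : q₂ ≠ 0)
    (hPT : IsPT n Γ e Φ q₁) (hNT : IsNT n Γ e Φ q₂) :
    IsCoprime q₁ q₂ := by
  classical
  by_contra hcop
  -- a nontrivial common divisor
  set d := EuclideanDomain.gcd q₁ q₂ with hd
  have hdvd1 : d ∣ q₁ := EuclideanDomain.gcd_dvd_left _ _
  have hdvd2 : d ∣ q₂ := EuclideanDomain.gcd_dvd_right _ _
  have hdu : ¬ IsUnit d := fun h => hcop (EuclideanDomain.gcd_isUnit_iff.mp h)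
  have hd0 : d ≠ 0 := fun h => hq₁ (zero_dvd_iff.mp (h ▸ hdvd1))
  have hdk : 1 ≤ d.natDegree := by
    by_contra h
    push_neg at h
    have h0 : d.natDegree = 0 := Nat.lt_one_iff.mp h
    have hc := Polynomial.eq_C_of_natDegree_eq_zero h0
    have hc0 : d.coeff 0 ≠ 0 := fun h' => hd0 (by rw [hc, h', Polynomial.C_0])
    exact hdu (hc ▸ Polynomial.isUnit_C.mpr (isUnit_iff_ne_zero.mpr hc0))
  obtain ⟨r₁, hr₁⟩ := hdvd1
  obtain ⟨r₂, hr₂⟩ := hdvd2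
  have hr₁0 : r₁ ≠ 0 := fun h => hq₁ (by rw [hr₁, h, mul_zero])
  have hr₂0 : r₂ ≠ 0 := fun h => hq₂ (by rw [hr₂, h, mul_zero])
  have hkey : q₁ * r₂ = q₂ * r₁ := by rw [hr₁, hr₂]; ring
  -- clear denominators
  obtain ⟨β₁, hβ₁0, hβ₁im, hgood₁⟩ := clear_denoms r₁
  obtain ⟨β₂, hβ₂0, hβ₂im, hgood₂⟩ := clear_denoms r₂
  obtain ⟨γ₁, hγ₁0, hγ₁im, hgoodq₁⟩ := clear_denoms q₁
  obtain ⟨γ₂, hγ₂0, hγ₂im, hgoodq₂⟩ := clear_denoms q₂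
  set p₁ : Polynomial (RatField n) := Polynomial.C β₁ * (Polynomial.C β₂ * r₂) with hp₁
  set p₂ : Polynomial (RatField n) := Polynomial.C β₂ * (Polynomial.C β₁ * r₁) with hp₂
  have hgoodp₁ : GoodPoly n p₁ := GoodPoly.C_mul hβ₁im hgood₂
  have hgoodp₂ : GoodPoly n p₂ := GoodPoly.C_mul hβ₂im hgood₁
  have hp₁0 : p₁ ≠ 0 := mul_ne_zero (Polynomial.C_ne_zero.mpr hβ₁0)
    (mul_ne_zero (Polynomial.C_ne_zero.mpr hβ₂0) hr₂0)
  have hp₂0 : p₂ ≠ 0 := mul_ne_zero (Polynomial.C_ne_zero.mpr hβ₂0)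
    (mul_ne_zero (Polynomial.C_ne_zero.mpr hβ₁0) hr₁0)
  have hiden : q₁ * p₁ = q₂ * p₂ := by
    rw [hp₁, hp₂]
    calc q₁ * (Polynomial.C β₁ * (Polynomial.C β₂ * r₂))
        = Polynomial.C β₁ * Polynomial.C β₂ * (q₁ * r₂) := by ring
      _ = Polynomial.C β₁ * Polynomial.C β₂ * (q₂ * r₁) := by rw [hkey]
      _ = q₂ * (Polynomial.C β₂ * (Polynomial.C β₁ * r₁)) := by ring
  -- expansions
  set Q₁ := mnExpand n Γ e Φ q₁ with hQ₁
  set Q₂ := mnExpand n Γ e Φ q₂ with hQ₂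
  set P₁ := mnExpand n Γ e Φ p₁ with hP₁
  set P₂ := mnExpand n Γ e Φ p₂ with hP₂
  have hgoodq₁' : GoodPoly n (Polynomial.C γ₁ * q₁) := hgoodq₁
  have hq₁'0 : Polynomial.C γ₁ * q₁ ≠ 0 := mul_ne_zero (Polynomial.C_ne_zero.mpr hγ₁0) hq₁
  have hexpC : ∀ (c : RatField n) (p : Polynomial (RatField n)),
      mnExpand n Γ e Φ (Polynomial.C c * p) = Φ c * mnExpand n Γ e Φ p := by
    intro c p
    rw [mnExpand_mul]
    congr 1
    simp [mnExpand, Polynomial.eval₂_C]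
  have hQ₁ne : Q₁ ≠ 0 := by
    intro h
    have := mnExpand_ne_zero hΦ hgoodq₁' hq₁'0
    rw [hexpC, ← hQ₁, h, mul_zero] at this
    exact this rfl
  have hQ₂ne : Q₂ ≠ 0 := by
    intro h
    have h2 : Polynomial.C γ₂ * q₂ ≠ 0 := mul_ne_zero (Polynomial.C_ne_zero.mpr hγ₂0) hq₂
    have := mnExpand_ne_zero hΦ hgoodq₂ h2
    rw [hexpC, ← hQ₂, h, mul_zero] at this
    exact this rfl
  have hQP : Q₁ * P₁ = Q₂ * P₂ := by
    rw [hQ₁, hP₁, hQ₂, hP₂, ← mnExpand_mul, ← mnExpand_mul, hiden]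
  set Z := P₂ * Q₁⁻¹ with hZ
  have hZ2 : Z = P₁ * Q₂⁻¹ := by
    rw [hZ, ← div_eq_mul_inv, ← div_eq_mul_inv, div_eq_div_iff hQ₁ne hQ₂ne]
    rw [mul_comm P₂, mul_comm P₁]
    exact hQP.symm
  have hP₂ne : P₂ ≠ 0 := mnExpand_ne_zero hΦ hgoodp₂ hp₂0
  have hZ0 : Z ≠ 0 := mul_ne_zero hP₂ne (inv_ne_zero hQ₁ne)
  -- λ-degree bounds on Z
  have hZlow : ∀ g ∈ Z.support, 0 ≤ (e g).1 := by
    intro g hg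
    obtain ⟨u, hu, v, hv, huv⟩ := Set.mem_add.mp (HahnSeries.support_mul_subset hg)
    have h1 := (mnExpand_supp_le hΦ hgoodp₂ u hu).1
    have h2 : 0 ≤ (e v).1 := hPT v hv
    rw [← huv, eFst_add]
    linarith
  have hZhigh : ∀ g ∈ Z.support, (e g).1 ≤ (p₁.natDegree : ℤ) - 1 := by
    intro g hg
    rw [hZ2] at hg
    obtain ⟨u, hu, v, hv, huv⟩ := Set.mem_add.mp (HahnSeries.support_mul_subset hg)
    have h1 := (mnExpand_supp_le hΦ hgoodp₁ u hu).2
    have h2 : (e v).1 < 0 := hNT v hv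
    rw [← huv, eFst_add]
    omega
  -- top λ-degree of Z
  obtain ⟨g₀, hg₀⟩ := HahnSeries.support_nonempty_iff.mpr hZ0
  obtain ⟨t, ht, htmax⟩ := Int.exists_greatest_of_bdd
    (P := fun z => ∃ g ∈ Z.support, (e g).1 = z)
    ⟨(p₁.natDegree : ℤ) - 1, fun z hz => by
      obtain ⟨g, hg, hgz⟩ := hz; exact hgz ▸ hZhigh g hg⟩
    ⟨(e g₀).1, g₀, hg₀, rfl⟩
  obtain ⟨gt, hgt, hgte⟩ := ht
  have ht0 : 0 ≤ t := hgte ▸ hZlow gt hgt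
  have htub : ∀ g ∈ Z.support, (e g).1 ≤ t := fun g hg => htmax _ ⟨g, hg, rfl⟩
  set B := ctFilter (fun g => (e g).1 = t) Z with hB
  have hB0 : B ≠ 0 := by
    intro h
    have : B.coeff gt = Z.coeff gt := by rw [hB, ctFilter_coeff, if_pos hgte]
    rw [h, HahnSeries.coeff_zero] at this
    exact hgt this.symm
  -- top λ-degree of Q₁''
  set m := q₁.natDegree with hm
  set Q₁'' := mnExpand n Γ e Φ (Polynomial.C γ₁ * q₁) with hQ₁''
  have hdegq : (Polynomial.C γ₁ * q₁).natDegree = m := Polynomial.natDegree_C_mul hγ₁0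
  set A := ctFilter (fun g => (e g).1 = (m : ℤ)) Q₁'' with hA
  have hA0 : A ≠ 0 := by
    have := mnExpand_top hΦ hgoodq₁' hq₁'0
    rw [hdegq] at this
    exact this
  have hQ₁''supp : ∀ g ∈ Q₁''.support, 0 ≤ (e g).1 ∧ (e g).1 ≤ (m : ℤ) := by
    intro g hg
    have := mnExpand_supp_le hΦ hgoodq₁' g hg
    rwa [hdegq] at this
  -- degree arithmetic
  have hmk : m = d.natDegree + r₁.natDegree := by
    rw [hm, hr₁]; exact Polynomial.natDegree_mul hd0 hr₁0
  have hdegp₂ : p₂.natDegree = r₁.natDegree := by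
    rw [hp₂, Polynomial.natDegree_C_mul hβ₂0, Polynomial.natDegree_C_mul hβ₁0]
  -- the product identity Z * Q₁'' = Φ γ₁ * P₂
  have hprod : Z * Q₁'' = mnExpand n Γ e Φ (Polynomial.C γ₁ * p₂) := by
    rw [hexpC, hQ₁'', hexpC, ← hQ₁, ← hP₂, hZ]
    rw [mul_comm (Φ γ₁) Q₁, ← mul_assoc, mul_assoc P₂, inv_mul_cancel₀ hQ₁ne, mul_one]
    ring
  -- filter the product at level t + m
  have hfilterP : ctFilter (fun g => (e g).1 = t + (m : ℤ))
      (mnExpand n Γ e Φ (Polynomial.C γ₁ * p₂)) = 0 := by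
    refine ctFilter_eq_zero (fun g hg => ?_)
    have hgood : GoodPoly n (Polynomial.C γ₁ * p₂) := GoodPoly.C_mul hγ₁im hgoodp₂
    have h2 := (mnExpand_supp_le hΦ hgood g hg).2
    have h3 : (Polynomial.C γ₁ * p₂).natDegree = r₁.natDegree := by
      rw [Polynomial.natDegree_C_mul hγ₁0, hdegp₂]
    rw [h3] at h2
    intro hcontra
    omega
  have hsuppB : ∀ g ∈ B.support, (e g).1 = t := fun g hg => (mem_support_ctFilter hg).1
  have hsuppA : ∀ g ∈ A.support, (e g).1 = (m : ℤ) := fun g hg => (mem_support_ctFilter hg).1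
  have hsuppZB : ∀ g ∈ (Z - B).support, (e g).1 < t := by
    intro g hg
    obtain ⟨hne, hmem⟩ := mem_support_sub_ctFilter hg
    exact lt_of_le_of_ne (htub g hmem) hne
  have hsuppQA : ∀ g ∈ (Q₁'' - A).support, (e g).1 < (m : ℤ) := by
    intro g hg
    obtain ⟨hne, hmem⟩ := mem_support_sub_ctFilter hg
    exact lt_of_le_of_ne (hQ₁''supp g hmem).2 hne
  have hsplit : Z * Q₁'' = B * A + (B * (Q₁'' - A) + ((Z - B) * A + (Z - B) * (Q₁'' - A))) := by
    ring
  have hBA : ctFilter (fun g => (e g).1 = t + (m : ℤ)) (Z * Q₁'') = B * A := by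
    rw [hsplit, ctFilter_add, ctFilter_add, ctFilter_add]
    have e1 : ctFilter (fun g => (e g).1 = t + (m : ℤ)) (B * A) = B * A := by
      refine ctFilter_eq_self (fun g hg => ?_)
      obtain ⟨u, hu, v, hv, huv⟩ := Set.mem_add.mp (HahnSeries.support_mul_subset hg)
      rw [← huv, eFst_add, hsuppB u hu, hsuppA v hv]
    have e2 : ctFilter (fun g => (e g).1 = t + (m : ℤ)) (B * (Q₁'' - A)) = 0 := by
      refine ctFilter_eq_zero (fun g hg => ?_)
      obtain ⟨u, hu, v, hv, huv⟩ := Set.mem_add.mp (HahnSeries.support_mul_subset hg)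
      have := hsuppQA v hv
      have := hsuppB u hu
      rw [← huv, eFst_add]
      omega
    have e3 : ctFilter (fun g => (e g).1 = t + (m : ℤ)) ((Z - B) * A) = 0 := by
      refine ctFilter_eq_zero (fun g hg => ?_)
      obtain ⟨u, hu, v, hv, huv⟩ := Set.mem_add.mp (HahnSeries.support_mul_subset hg)
      have := hsuppZB u hu
      have := hsuppA v hv
      rw [← huv, eFst_add]
      omega
    have e4 : ctFilter (fun g => (e g).1 = t + (m : ℤ)) ((Z - B) * (Q₁'' - A)) = 0 := by
      refine ctFilter_eq_zero (fun g hg => ?_)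
      obtain ⟨u, hu, v, hv, huv⟩ := Set.mem_add.mp (HahnSeries.support_mul_subset hg)
      have := hsuppZB u hu
      have := hsuppQA v hv
      rw [← huv, eFst_add]
      omega
    rw [e1, e2, e3, e4]
    abel
  rw [hprod, hfilterP] at hBA
  exact mul_ne_zero hB0 hA0 hBA.symm

end
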